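/- Let G be a connected finite simple graph on n vertices, and let s, t be vertices of G. Let G' be the simple graph obtained from G by attaching two new paths of 2n new vertices each: new vertices p_1, …, p_{2n} with edges {s,p_1} and {p_i,p_{i+1}} for 1 ≤ i ≤ 2n−1, and new vertices q_1, …, q_{2n} with edges {t,q_1} and {q_i,q_{i+1}} for 1 ≤ i ≤ 2n−1. Then the two chain endpoints satisfy ecc_{G'}(p_{2n}) = ecc_{G'}(q_{2n}) = dist_{G'}(p_{2n}, q_{2n}) = diam(G') = 4n + dist_G(s,t). -/
import Mathlib


/-- The eccentricity of a vertex `u` in a finite simple graph: the maximum of the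
distances from `u` to the other vertices. -/
noncomputable def gecc {α : Type} [Fintype α] (H : SimpleGraph α) (u : α) : ℕ :=
  Finset.univ.sup fun v => H.dist u v

/-- The diameter of a finite simple graph: the maximum distance between two vertices. -/
noncomputable def gdiam {α : Type} [Fintype α] (H : SimpleGraph α) : ℕ :=
  Finset.univ.sup fun p : α × α => H.dist p.1 p.2

/-- The graph `G'` obtained from `G` by attaching two new paths (chains) of `2n` new
vertices each: `p_1, …, p_{2n}` (the vertices `Sum.inr (Sum.inl i)`, `p_i` having index
`i - 1`) with edges `{s,p_1}` and `{p_i, p_{i+1}}`, and `q_1, …, q_{2n}` (the vertices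
`Sum.inr (Sum.inr i)`) with edges `{t,q_1}` and `{q_i, q_{i+1}}`. -/
def attachChains {V : Type} (G : SimpleGraph V) (s t : V) (n : ℕ) :
    SimpleGraph (V ⊕ (Fin (2 * n) ⊕ Fin (2 * n))) :=
  SimpleGraph.fromRel fun x y =>
    (∃ u v : V, G.Adj u v ∧ x = Sum.inl u ∧ y = Sum.inl v) ∨
    (∃ h : 0 < 2 * n, x = Sum.inl s ∧ y = Sum.inr (Sum.inl ⟨0, h⟩)) ∨
    (∃ i j : Fin (2 * n), (i : ℕ) + 1 = (j : ℕ) ∧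
      x = Sum.inr (Sum.inl i) ∧ y = Sum.inr (Sum.inl j)) ∨
    (∃ h : 0 < 2 * n, x = Sum.inl t ∧ y = Sum.inr (Sum.inr ⟨0, h⟩)) ∨
    (∃ i j : Fin (2 * n), (i : ℕ) + 1 = (j : ℕ) ∧
      x = Sum.inr (Sum.inr i) ∧ y = Sum.inr (Sum.inr j))

section Aux

variable {V : Type} (G : SimpleGraph V) (s t : V) (n : ℕ)

lemma ac_adj_inl {u v : V} (h : G.Adj u v) :
    (attachChains G s t n).Adj (Sum.inl u) (Sum.inl v) := by
  rw [attachChains, SimpleGraph.fromRel_adj]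
  exact ⟨by simp [h.ne], Or.inl (Or.inl ⟨u, v, h, rfl, rfl⟩)⟩

lemma ac_adj_sp (h : 0 < 2 * n) :
    (attachChains G s t n).Adj (Sum.inl s) (Sum.inr (Sum.inl ⟨0, h⟩)) := by
  rw [attachChains, SimpleGraph.fromRel_adj]
  exact ⟨by simp, Or.inl (Or.inr (Or.inl ⟨h, rfl, rfl⟩))⟩

lemma ac_adj_tq (h : 0 < 2 * n) :
    (attachChains G s t n).Adj (Sum.inl t) (Sum.inr (Sum.inr ⟨0, h⟩)) := by
  rw [attachChains, SimpleGraph.fromRel_adj]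
  exact ⟨by simp, Or.inl (Or.inr (Or.inr (Or.inr (Or.inl ⟨h, rfl, rfl⟩))))⟩

lemma ac_adj_pp {i j : Fin (2 * n)} (h : (i : ℕ) + 1 = (j : ℕ)) :
    (attachChains G s t n).Adj (Sum.inr (Sum.inl i)) (Sum.inr (Sum.inl j)) := by
  rw [attachChains, SimpleGraph.fromRel_adj]
  refine ⟨?_, Or.inl (Or.inr (Or.inr (Or.inl ⟨i, j, h, rfl, rfl⟩)))⟩
  simp only [ne_eq, Sum.inr.injEq, Sum.inl.injEq]
  intro he; rw [he] at h; omega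

lemma ac_adj_qq {i j : Fin (2 * n)} (h : (i : ℕ) + 1 = (j : ℕ)) :
    (attachChains G s t n).Adj (Sum.inr (Sum.inr i)) (Sum.inr (Sum.inr j)) := by
  rw [attachChains, SimpleGraph.fromRel_adj]
  refine ⟨?_, Or.inl (Or.inr (Or.inr (Or.inr (Or.inr ⟨i, j, h, rfl, rfl⟩))))⟩
  simp only [ne_eq, Sum.inr.injEq]
  intro he; rw [he] at h; omega

/-- The homomorphism from `G` into `attachChains`. -/
def acHom : G →g attachChains G s t n := ⟨Sum.inl, fun h => ac_adj_inl G s t n h⟩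

lemma ac_walk_sp : ∀ (m : ℕ) (h : m < 2 * n),
    ∃ w : (attachChains G s t n).Walk (Sum.inl s) (Sum.inr (Sum.inl ⟨m, h⟩)),
      w.length = m + 1 := by
  intro m
  induction m with
  | zero => intro h; exact ⟨(ac_adj_sp G s t n h).toWalk, by simp⟩
  | succ k ih =>
    intro h
    obtain ⟨w, hw⟩ := ih (by omega)
    exact ⟨w.concat (ac_adj_pp G s t n (by simp)), by simp [hw]⟩

lemma ac_walk_tq : ∀ (m : ℕ) (h : m < 2 * n),
    ∃ w : (attachChains G s t n).Walk (Sum.inl t) (Sum.inr (Sum.inr ⟨m, h⟩)),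
      w.length = m + 1 := by
  intro m
  induction m with
  | zero => intro h; exact ⟨(ac_adj_tq G s t n h).toWalk, by simp⟩
  | succ k ih =>
    intro h
    obtain ⟨w, hw⟩ := ih (by omega)
    exact ⟨w.concat (ac_adj_qq G s t n (by simp)), by simp [hw]⟩

end Aux

section Phi

variable {V : Type} (G : SimpleGraph V) (s t : V) (n : ℕ)

/-- Potential function witnessing the lower bound on distances. -/
noncomputable def acPhi : V ⊕ (Fin (2 * n) ⊕ Fin (2 * n)) → ℤ
  | Sum.inl u => G.dist s u
  | Sum.inr (Sum.inl i) => -((i : ℕ) + 1)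
  | Sum.inr (Sum.inr j) => G.dist s t + ((j : ℕ) + 1)

variable {G s t n}

lemma acPhi_rel (hconn : G.Connected) {x y : V ⊕ (Fin (2 * n) ⊕ Fin (2 * n))}
    (h : (∃ u v : V, G.Adj u v ∧ x = Sum.inl u ∧ y = Sum.inl v) ∨
    (∃ h : 0 < 2 * n, x = Sum.inl s ∧ y = Sum.inr (Sum.inl ⟨0, h⟩)) ∨
    (∃ i j : Fin (2 * n), (i : ℕ) + 1 = (j : ℕ) ∧
      x = Sum.inr (Sum.inl i) ∧ y = Sum.inr (Sum.inl j)) ∨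
    (∃ h : 0 < 2 * n, x = Sum.inl t ∧ y = Sum.inr (Sum.inr ⟨0, h⟩)) ∨
    (∃ i j : Fin (2 * n), (i : ℕ) + 1 = (j : ℕ) ∧
      x = Sum.inr (Sum.inr i) ∧ y = Sum.inr (Sum.inr j))) :
    (acPhi G s t n x - acPhi G s t n y).natAbs ≤ 1 := by
  rcases h with ⟨u, v, huv, rfl, rfl⟩ | ⟨h0, rfl, rfl⟩ | ⟨i, j, hij, rfl, rfl⟩ |
    ⟨h0, rfl, rfl⟩ | ⟨i, j, hij, rfl, rfl⟩
  · have h1 : G.dist s u ≤ G.dist s v + 1 := by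
      calc G.dist s u ≤ G.dist s v + G.dist v u := hconn.dist_triangle
        _ ≤ G.dist s v + 1 := by
            have := SimpleGraph.dist_le huv.symm.toWalk
            simp at this; omega
    have h2 : G.dist s v ≤ G.dist s u + 1 := by
      calc G.dist s v ≤ G.dist s u + G.dist u v := hconn.dist_triangle
        _ ≤ G.dist s u + 1 := by
            have := SimpleGraph.dist_le huv.toWalk
            simp at this; omega
    simp only [acPhi]; omega
  · simp only [acPhi, SimpleGraph.dist_self]; simp
  · simp only [acPhi]; omega
  · simp only [acPhi]; omega
  · simp only [acPhi]; omega

lemma acPhi_adj (hconn : G.Connected) {x y : V ⊕ (Fin (2 * n) ⊕ Fin (2 * n))}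
    (h : (attachChains G s t n).Adj x y) :
    (acPhi G s t n x - acPhi G s t n y).natAbs ≤ 1 := by
  rw [attachChains, SimpleGraph.fromRel_adj] at h
  rcases h with ⟨-, h | h⟩
  · exact acPhi_rel hconn h
  · have := acPhi_rel hconn h; omega

lemma acPhi_walk (hconn : G.Connected) {x y : V ⊕ (Fin (2 * n) ⊕ Fin (2 * n))}
    (w : (attachChains G s t n).Walk x y) :
    (acPhi G s t n x - acPhi G s t n y).natAbs ≤ w.length := by
  induction w with
  | nil => simp
  | @cons a b c hab p ih =>
    have h1 := acPhi_adj hconn hab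
    have h2 : acPhi G s t n a - acPhi G s t n c =
        (acPhi G s t n a - acPhi G s t n b) + (acPhi G s t n b - acPhi G s t n c) := by ring
    calc (acPhi G s t n a - acPhi G s t n c).natAbs
        ≤ (acPhi G s t n a - acPhi G s t n b).natAbs
          + (acPhi G s t n b - acPhi G s t n c).natAbs := by
          rw [h2]; exact Int.natAbs_add_le _ _
      _ ≤ 1 + p.length := by omega
      _ = (SimpleGraph.Walk.cons hab p).length := by simp [SimpleGraph.Walk.length_cons]; omega

end Phi

section Dist

variable {V : Type} {G : SimpleGraph V} {s t : V} {n : ℕ}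

lemma ac_connected (hconn : G.Connected) : (attachChains G s t n).Connected := by
  have hs : ∀ x, (attachChains G s t n).Reachable (Sum.inl s) x := by
    intro x
    rcases x with u | i | i
    · exact SimpleGraph.Reachable.map (acHom G s t n) (hconn s u)
    · obtain ⟨w, -⟩ := ac_walk_sp G s t n i.val i.isLt
      exact w.reachable
    · obtain ⟨w, -⟩ := ac_walk_tq G s t n i.val i.isLt
      exact ((SimpleGraph.Reachable.map (acHom G s t n) (hconn s t)).trans w.reachable)
  haveI : Nonempty V := hconn.nonempty
  exact ⟨fun x y => (hs x).symm.trans (hs y)⟩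

lemma ac_dist_inl (hconn : G.Connected) (u v : V) :
    (attachChains G s t n).dist (Sum.inl u) (Sum.inl v) ≤ G.dist u v := by
  obtain ⟨w, hw⟩ := hconn.exists_walk_length_eq_dist u v
  calc (attachChains G s t n).dist (Sum.inl u) (Sum.inl v)
      ≤ (w.map (acHom G s t n)).length := SimpleGraph.dist_le _
    _ = G.dist u v := by rw [SimpleGraph.Walk.length_map, hw]

lemma ac_dist_sp (j : Fin (2 * n)) :
    (attachChains G s t n).dist (Sum.inl s) (Sum.inr (Sum.inl j)) ≤ (j : ℕ) + 1 := by
  obtain ⟨w, hw⟩ := ac_walk_sp G s t n j.val j.isLt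
  exact hw ▸ SimpleGraph.dist_le w

lemma ac_dist_tq (j : Fin (2 * n)) :
    (attachChains G s t n).dist (Sum.inl t) (Sum.inr (Sum.inr j)) ≤ (j : ℕ) + 1 := by
  obtain ⟨w, hw⟩ := ac_walk_tq G s t n j.val j.isLt
  exact hw ▸ SimpleGraph.dist_le w

end Dist


/-- if `G` is a connected finite simple graph on `n` vertices and `s t` are
vertices of `G`, then in the graph `G'` obtained by attaching chains of `2n` new vertices
to `s` and to `t`, the chain endpoints `p_{2n}` (the vertex `Sum.inr (Sum.inl i)` with
`i = 2n - 1`) and `q_{2n}` (the vertex `Sum.inr (Sum.inr i)`) satisfy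
`ecc(p_{2n}) = ecc(q_{2n}) = dist(p_{2n}, q_{2n}) = diam(G') = 4n + dist_G(s,t)`. -/
theorem stmt_6 {V : Type} [Fintype V] (n : ℕ) (hcard : Fintype.card V = n)
    (G : SimpleGraph V) (hconn : G.Connected) (s t : V) :
    ∀ i : Fin (2 * n), (i : ℕ) = 2 * n - 1 →
      gecc (attachChains G s t n) (Sum.inr (Sum.inl i)) = 4 * n + G.dist s t ∧
      gecc (attachChains G s t n) (Sum.inr (Sum.inr i)) = 4 * n + G.dist s t ∧
      (attachChains G s t n).dist (Sum.inr (Sum.inl i)) (Sum.inr (Sum.inr i))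
        = 4 * n + G.dist s t ∧
      gdiam (attachChains G s t n) = 4 * n + G.dist s t := by
  intro i hi
  classical
  have hn : 0 < n := by have := i.isLt; omega
  have hG' : (attachChains G s t n).Connected := ac_connected hconn
  have hdltn : ∀ u v : V, G.dist u v < n := by
    intro u v
    obtain ⟨w, hw⟩ := hconn.exists_walk_length_eq_dist u v
    have h1 := SimpleGraph.dist_le w.bypass
    have h2 : w.bypass.length < Fintype.card V := w.bypass_isPath.length_lt
    omega
  have Hss : ∀ u v : V, (attachChains G s t n).dist (Sum.inl u) (Sum.inl v) ≤ G.dist u v :=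
    ac_dist_inl hconn
  have Hsq : ∀ j : Fin (2 * n), (attachChains G s t n).dist (Sum.inl s) (Sum.inr (Sum.inr j))
      ≤ G.dist s t + ((j : ℕ) + 1) :=
    fun j => (hG'.dist_triangle (v := Sum.inl t)).trans (add_le_add (Hss s t) (ac_dist_tq j))
  have Htp : ∀ j : Fin (2 * n), (attachChains G s t n).dist (Sum.inl t) (Sum.inr (Sum.inl j))
      ≤ G.dist s t + ((j : ℕ) + 1) := by
    intro j
    refine (hG'.dist_triangle (v := Sum.inl s)).trans (add_le_add ?_ (ac_dist_sp j))
    have h := Hss t s; rw [SimpleGraph.dist_comm (u := t) (v := s)] at h; exact h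
  -- master upper bound
  have Hd : ∀ x y : V ⊕ (Fin (2 * n) ⊕ Fin (2 * n)),
      (attachChains G s t n).dist x y ≤ 4 * n + G.dist s t := by
    intro x y
    rcases x with u | j | j <;> rcases y with v | k | k
    · exact (Hss u v).trans (by have := hdltn u v; omega)
    · refine (hG'.dist_triangle (v := Sum.inl s)).trans ?_
      have h1 := Hss u s; have h2 := ac_dist_sp (G := G) (s := s) (t := t) (n := n) k
      have h3 := hdltn u s; have h4 := k.isLt; omega
    · refine (hG'.dist_triangle (v := Sum.inl t)).trans ?_
      have h1 := Hss u t; have h2 := ac_dist_tq (G := G) (s := s) (t := t) (n := n) k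
      have h3 := hdltn u t; have h4 := k.isLt; omega
    · refine (hG'.dist_triangle (v := Sum.inl s)).trans ?_
      have h1 : (attachChains G s t n).dist (Sum.inr (Sum.inl j)) (Sum.inl s) ≤ (j : ℕ) + 1 := by
        rw [SimpleGraph.dist_comm]; exact ac_dist_sp j
      have h2 := Hss s v; have h3 := hdltn s v; have h4 := j.isLt; omega
    · refine (hG'.dist_triangle (v := Sum.inl s)).trans ?_
      have h1 : (attachChains G s t n).dist (Sum.inr (Sum.inl j)) (Sum.inl s) ≤ (j : ℕ) + 1 := by
        rw [SimpleGraph.dist_comm]; exact ac_dist_sp j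
      have h2 := ac_dist_sp (G := G) (s := s) (t := t) (n := n) k
      have h3 := j.isLt; have h4 := k.isLt; omega
    · refine (hG'.dist_triangle (v := Sum.inl s)).trans ?_
      have h1 : (attachChains G s t n).dist (Sum.inr (Sum.inl j)) (Sum.inl s) ≤ (j : ℕ) + 1 := by
        rw [SimpleGraph.dist_comm]; exact ac_dist_sp j
      have h2 := Hsq k; have h3 := j.isLt; have h4 := k.isLt; omega
    · refine (hG'.dist_triangle (v := Sum.inl t)).trans ?_
      have h1 : (attachChains G s t n).dist (Sum.inr (Sum.inr j)) (Sum.inl t) ≤ (j : ℕ) + 1 := by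
        rw [SimpleGraph.dist_comm]; exact ac_dist_tq j
      have h2 := Hss t v; have h3 := hdltn t v; have h4 := j.isLt; omega
    · refine (hG'.dist_triangle (v := Sum.inl t)).trans ?_
      have h1 : (attachChains G s t n).dist (Sum.inr (Sum.inr j)) (Sum.inl t) ≤ (j : ℕ) + 1 := by
        rw [SimpleGraph.dist_comm]; exact ac_dist_tq j
      have h2 := Htp k; have h3 := j.isLt; have h4 := k.isLt; omega
    · refine (hG'.dist_triangle (v := Sum.inl t)).trans ?_
      have h1 : (attachChains G s t n).dist (Sum.inr (Sum.inr j)) (Sum.inl t) ≤ (j : ℕ) + 1 := by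
        rw [SimpleGraph.dist_comm]; exact ac_dist_tq j
      have h2 := ac_dist_tq (G := G) (s := s) (t := t) (n := n) k
      have h3 := j.isLt; have h4 := k.isLt; omega
  -- lower bound on dist p q
  have hpq : (attachChains G s t n).dist (Sum.inr (Sum.inl i)) (Sum.inr (Sum.inr i))
      = 4 * n + G.dist s t := by
    refine le_antisymm (Hd _ _) ?_
    obtain ⟨w, hw⟩ := hG'.exists_walk_length_eq_dist (Sum.inr (Sum.inl i)) (Sum.inr (Sum.inr i))
    have h1 := acPhi_walk hconn w
    rw [hw] at h1
    simp only [acPhi] at h1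
    omega
  refine ⟨?_, ?_, hpq, ?_⟩
  · unfold gecc
    apply le_antisymm
    · exact Finset.sup_le fun v _ => Hd _ v
    · exact hpq ▸ Finset.le_sup (f := fun v => (attachChains G s t n).dist (Sum.inr (Sum.inl i)) v)
        (Finset.mem_univ (Sum.inr (Sum.inr i)))
  · unfold gecc
    apply le_antisymm
    · exact Finset.sup_le fun v _ => Hd _ v
    · have hpq' : (attachChains G s t n).dist (Sum.inr (Sum.inr i)) (Sum.inr (Sum.inl i))
          = 4 * n + G.dist s t := by rw [SimpleGraph.dist_comm]; exact hpq
      exact hpq' ▸ Finset.le_sup (f := fun v => (attachChains G s t n).dist (Sum.inr (Sum.inr i)) v)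
        (Finset.mem_univ (Sum.inr (Sum.inl i)))
  · unfold gdiam
    apply le_antisymm
    · exact Finset.sup_le fun pr _ => Hd pr.1 pr.2
    · exact hpq ▸ Finset.le_sup
        (f := fun pr : _ × _ => (attachChains G s t n).dist pr.1 pr.2)
        (Finset.mem_univ (Sum.inr (Sum.inl i), Sum.inr (Sum.inr i)))
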